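/- Let n ≥ 1, let Q ⊆ ℝ^n × ℝ be open, and let X₀ = (x₀,t₀) ∈ ∂Q \ closure(∂_p Q). Then there exists r > 0 such that B_r(x₀) × {t₀} ⊆ ∂Q \ closure(∂_p Q), B_r(x₀) × (t₀, t₀ + r²) ⊆ (ℝ^n × ℝ) \ closure(Q), and B_r(x₀) × (t₀ − r², t₀) ⊆ Q. -/

import Mathlib

open MeasureTheory Real Set Metric Filter
open Topology

noncomputable section

/-- The space ℝ^n × ℝ (spatial × time). -/
abbrev Spc (n : ℕ) := EuclideanSpace ℝ (Fin n) × ℝ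

/-- Parabolic cylinder C_r(Y) = B_r(y) × (s - r², s). -/
def pCyl (n : ℕ) (Y : Spc n) (r : ℝ) : Set (Spc n) :=
  (Metric.ball Y.1 r) ×ˢ (Set.Ioo (Y.2 - r ^ 2) Y.2)

/-- |C_r|: the measure of a parabolic cylinder of radius r. -/
def cylVol (n : ℕ) (r : ℝ) : ENNReal :=
  volume (pCyl n ((0 : EuclideanSpace ℝ (Fin n)), (0 : ℝ)) r)

/-- The parabolic boundary of an open set Q. -/
def pBoundary (n : ℕ) (Q : Set (Spc n)) : Set (Spc n) :=
  {X | X ∈ frontier Q ∧ ∃ δ > (0 : ℝ), ∃ γ : ℝ → EuclideanSpace ℝ (Fin n),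
    ContinuousOn γ (Set.Ico X.2 (X.2 + δ)) ∧ γ X.2 = X.1 ∧
    ∀ t ∈ Set.Ioo X.2 (X.2 + δ), (γ t, t) ∈ Q}

/-- Condition (A): exterior measure condition. -/
def condA (n : ℕ) (Q : Set (Spc n)) (θ₀ : ℝ) : Prop :=
  ∀ X ∈ pBoundary n Q, ∀ r > (0 : ℝ),
    ENNReal.ofReal θ₀ * cylVol n r < volume (pCyl n X r \ Q)

/-- Parabolic distance. -/
def pDist (n : ℕ) (X Y : Spc n) : ℝ := max ‖X.1 - Y.1‖ (Real.sqrt |X.2 - Y.2|)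

/-- The fundamental solution of the heat equation. -/
def heatF (n : ℕ) (x : EuclideanSpace ℝ (Fin n)) (t : ℝ) : ℝ :=
  if 0 < t then (4 * π * t) ^ (-(n : ℝ) / 2) * Real.exp (-‖x‖ ^ 2 / (4 * t)) else 0

/-- Heat ball E(X, r). -/
def heatBall (n : ℕ) (X : Spc n) (r : ℝ) : Set (Spc n) :=
  {Y | r ≤ heatF n (X.1 - Y.1) (X.2 - Y.2)}

/-- Thermal capacity of a set. -/
def thermalCap (n : ℕ) (K : Set (Spc n)) : ENNReal :=
  sSup {m : ENNReal | ∃ μ : Measure (Spc n), IsFiniteMeasure μ ∧ μ Kᶜ = 0 ∧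
    (∀ X : Spc n, ∫⁻ Y, ENNReal.ofReal (heatF n (X.1 - Y.1) (X.2 - Y.2)) ∂μ ≤ 1) ∧
    m = μ Set.univ}

/-- Heat shell {Y : a ≤ F(Y₀ - Y) ≤ b}. -/
def heatShell (n : ℕ) (Y₀ : Spc n) (a b : ℝ) : Set (Spc n) :=
  {Y | a ≤ heatF n (Y₀.1 - Y.1) (Y₀.2 - Y.2) ∧ heatF n (Y₀.1 - Y.1) (Y₀.2 - Y.2) ≤ b}


/-- Auxiliary: if a continuous space-time path stays inside a set `U` disjoint from the
parabolic boundary and ends in `Q`, then the whole path lies in `Q`. -/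
lemma path_into_Q {n : ℕ} {Q : Set (Spc n)} (hQ : IsOpen Q)
    {U : Set (Spc n)} (hU : ∀ X ∈ U, X ∉ pBoundary n Q)
    {γ : ℝ → EuclideanSpace ℝ (Fin n)} {a b : ℝ}
    (hγ : ContinuousOn γ (Set.Icc a b))
    (hmem : ∀ t ∈ Set.Icc a b, (γ t, t) ∈ U)
    (hb : (γ b, b) ∈ Q) :
    ∀ t ∈ Set.Icc a b, (γ t, t) ∈ Q := by
  by_contra h
  push_neg at h
  obtain ⟨t₁, ht₁, ht₁Q⟩ := h
  set f : ℝ → Spc n := fun t => (γ t, t) with hf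
  have hfc : ContinuousOn f (Set.Icc a b) := hγ.prodMk continuousOn_id
  set T : Set ℝ := Set.Icc a b ∩ f ⁻¹' Qᶜ with hT
  have hTne : T.Nonempty := ⟨t₁, ht₁, ht₁Q⟩
  have hTbdd : BddAbove T := ⟨b, fun t ht => ht.1.2⟩
  have hTcl : IsClosed T := hfc.preimage_isClosed_of_isClosed isClosed_Icc hQ.isClosed_compl
  set τ := sSup T with hτ
  have hτT : τ ∈ T := hTcl.csSup_mem hTne hTbdd
  have hτab : τ ∈ Set.Icc a b := hτT.1
  have hτb : τ < b := lt_of_le_of_ne hτab.2 (fun h => hτT.2 (by rw [hf]; simp only; rw [h]; exact hb))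
  have hIsub : Set.Ioo τ b ⊆ Set.Icc a b := fun t ht => ⟨le_trans hτab.1 ht.1.le, ht.2.le⟩
  have hgt : ∀ t ∈ Set.Ioo τ b, (γ t, t) ∈ Q := by
    intro t ht
    by_contra htQ
    exact absurd (le_csSup hTbdd ⟨hIsub ht, htQ⟩) (not_le.mpr ht.1)
  have hcl : (γ τ, τ) ∈ closure Q := by
    have hne : (𝓝[Set.Ioo τ b] τ).NeBot := by
      rw [← mem_closure_iff_nhdsWithin_neBot, closure_Ioo hτb.ne]
      exact ⟨le_refl _, hτb.le⟩
    have htd : Filter.Tendsto f (𝓝[Set.Ioo τ b] τ) (𝓝 (f τ)) :=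
      (hfc τ hτab).mono_left (nhdsWithin_mono _ hIsub)
    exact mem_closure_of_tendsto htd (Filter.eventually_of_mem self_mem_nhdsWithin hgt)
  have hpb : (γ τ, τ) ∈ pBoundary n Q := by
    have hτbb : τ + (b - τ) = b := by ring
    refine ⟨?_, b - τ, by linarith, γ, ?_, rfl, ?_⟩
    · rw [hQ.frontier_eq]; exact ⟨hcl, hτT.2⟩
    · show ContinuousOn γ (Set.Ico τ (τ + (b - τ)))
      rw [hτbb]
      exact hγ.mono (fun t ht => ⟨le_trans hτab.1 ht.1, ht.2.le⟩)
    · intro t ht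
      have ht' : t ∈ Set.Ioo τ b := by
        simpa [hτbb] using ht
      exact hgt t ht'
  exact hU _ (hmem τ hτab) hpb

/-- Near a point of `∂Q \ closure(∂_p Q)` the boundary is locally flat. -/
theorem frontier_minus_parabolic_boundary_flat
    (n : ℕ) (hn : 1 ≤ n) (Q : Set (Spc n)) (hQ : IsOpen Q)
    (x₀ : EuclideanSpace ℝ (Fin n)) (t₀ : ℝ)
    (hX : (x₀, t₀) ∈ frontier Q \ closure (pBoundary n Q)) :
    ∃ r > (0 : ℝ),
      (Metric.ball x₀ r) ×ˢ ({t₀} : Set ℝ) ⊆ frontier Q \ closure (pBoundary n Q) ∧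
      (Metric.ball x₀ r) ×ˢ (Set.Ioo t₀ (t₀ + r ^ 2)) ⊆ (closure Q)ᶜ ∧
      (Metric.ball x₀ r) ×ˢ (Set.Ioo (t₀ - r ^ 2) t₀) ⊆ Q := by
  obtain ⟨hfr, hncl⟩ := hX
  obtain ⟨ε, hε, hball⟩ :=
    Metric.isOpen_iff.mp isClosed_closure.isOpen_compl _ hncl
  set U : Set (Spc n) := Metric.ball x₀ ε ×ˢ Set.Ioo (t₀ - ε) (t₀ + ε) with hUdef
  have hUsub : U ⊆ (closure (pBoundary n Q))ᶜ := by
    rintro ⟨y, s⟩ ⟨hy, hs⟩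
    apply hball
    rw [Metric.mem_ball, Prod.dist_eq, max_lt_iff]
    refine ⟨hy, ?_⟩
    rw [Real.dist_eq, abs_sub_lt_iff]
    exact ⟨by linarith [hs.2], by linarith [hs.1]⟩
  have hUpb : ∀ X ∈ U, X ∉ pBoundary n Q :=
    fun X hXU hpb => hUsub hXU (subset_closure hpb)
  -- Step A : sweeping backwards in time inside U
  have stepA : ∀ y' s', (y', s') ∈ U → ∀ y s, (y, s) ∈ U → (y, s) ∈ Q → s' < s →
      (y', s') ∈ Q := by
    intro y' s' hY' y s hY hQmem hlt
    set γ : ℝ → EuclideanSpace ℝ (Fin n) :=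
      fun t => y' + ((t - s') / (s - s')) • (y - y') with hγdef
    have hss : s - s' ≠ 0 := sub_ne_zero.mpr hlt.ne'
    have hcont : ContinuousOn γ (Set.Icc s' s) := by fun_prop
    have hY'1 : y' ∈ Metric.ball x₀ ε := hY'.1
    have hY1 : y ∈ Metric.ball x₀ ε := hY.1
    have hY'2 : t₀ - ε < s' := by have := hY'.2; simp only [Set.mem_Ioo] at this; exact this.1
    have hY2 : s < t₀ + ε := by have := hY.2; simp only [Set.mem_Ioo] at this; exact this.2
    have hmemU : ∀ t ∈ Set.Icc s' s, (γ t, t) ∈ U := by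
      intro t ht
      refine Set.mk_mem_prod ?_ ?_
      · have hIcc : (t - s') / (s - s') ∈ Set.Icc (0 : ℝ) 1 :=
          ⟨div_nonneg (by linarith [ht.1]) (by linarith),
           by rw [div_le_one (by linarith)]; linarith [ht.2]⟩
        exact (convex_ball x₀ ε).add_smul_sub_mem hY'1 hY1 hIcc
      · exact Set.mem_Ioo.mpr ⟨by linarith [ht.1], by linarith [ht.2]⟩
    have hbmem : (γ s, s) ∈ Q := by
      have hγs : γ s = y := by
        simp only [hγdef, div_self hss, one_smul]
        abel
      rwa [hγs]
    have := path_into_Q hQ hUpb hcont hmemU hbmem s' ⟨le_refl _, hlt.le⟩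
    have hγs' : γ s' = y' := by simp [hγdef]
    rwa [hγs'] at this
  have hfr' : (x₀, t₀) ∈ closure Q \ Q := by rwa [hQ.frontier_eq] at hfr
  have hX₀U : (x₀, t₀) ∈ U :=
    Set.mk_mem_prod (mem_ball_self hε) (Set.mem_Ioo.mpr ⟨by linarith, by linarith⟩)
  -- no Q points strictly above t₀ inside U
  have hstrict : ∀ y s, (y, s) ∈ U → t₀ < s → (y, s) ∉ Q :=
    fun y s hYU hts hQm => hfr'.2 (stepA x₀ t₀ hX₀U y s hYU hQm hts)
  -- no Q points at time t₀ inside the spatial ball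
  have heq0 : ∀ y, y ∈ Metric.ball x₀ ε → (y, t₀) ∉ Q := by
    intro y hy hQm
    obtain ⟨ρ, hρ, hρsub⟩ := Metric.isOpen_iff.mp hQ (y, t₀) hQm
    set δ := min ρ ε / 2 with hδdef
    have hδpos : 0 < δ := by positivity
    have hδρ : δ < ρ := by
      have : min ρ ε ≤ ρ := min_le_left _ _
      simp only [hδdef]; linarith
    have hδε : δ < ε := by
      have : min ρ ε ≤ ε := min_le_right _ _
      simp only [hδdef]; linarith
    have h1 : (y, t₀ + δ) ∈ Q := by
      apply hρsub
      rw [Metric.mem_ball, Prod.dist_eq, max_lt_iff]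
      constructor
      · simpa using hρ
      · rw [Real.dist_eq]
        rw [show t₀ + δ - t₀ = δ by ring, abs_of_pos hδpos]
        exact hδρ
    exact hstrict y (t₀ + δ)
      (Set.mk_mem_prod hy (Set.mem_Ioo.mpr ⟨by linarith, by linarith⟩)) (by linarith) h1
  -- everything strictly below t₀ inside U is in Q
  have hbelow : ∀ y s, (y, s) ∈ U → s < t₀ → (y, s) ∈ Q := by
    intro y s hYU hst
    set η := min ε (t₀ - s) with hηdef
    have hη : 0 < η := lt_min hε (by linarith)
    obtain ⟨⟨z, σ⟩, hzQ, hdist⟩ := Metric.mem_closure_iff.mp hfr'.1 η hη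
    rw [Prod.dist_eq, max_lt_iff] at hdist
    have hd1 : dist z x₀ < ε := by
      have := hdist.1
      rw [dist_comm] at this
      exact lt_of_lt_of_le this (min_le_left _ _)
    have hd2 : |t₀ - σ| < η := by rw [← Real.dist_eq]; exact hdist.2
    rw [abs_sub_lt_iff] at hd2
    have hηε : η ≤ ε := min_le_left _ _
    have hηts : η ≤ t₀ - s := min_le_right _ _
    have hσU : (z, σ) ∈ U := Set.mk_mem_prod hd1
      (Set.mem_Ioo.mpr ⟨by linarith [hd2.1, hd2.2], by linarith [hd2.1, hd2.2]⟩)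
    exact stepA y s hYU z σ hσU hzQ (by linarith [hd2.1])
  -- choose r
  refine ⟨min ε (Real.sqrt ε), lt_min hε (Real.sqrt_pos.mpr hε), ?_, ?_, ?_⟩
  all_goals
    have hrε : min ε (Real.sqrt ε) ≤ ε := min_le_left _ _
    have hr2 : min ε (Real.sqrt ε) ^ 2 ≤ ε := by
      calc min ε (Real.sqrt ε) ^ 2 ≤ Real.sqrt ε ^ 2 :=
            pow_le_pow_left₀ (le_min hε.le (Real.sqrt_pos.mpr hε).le) (min_le_right _ _) 2
        _ = ε := Real.sq_sqrt hε.le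
  · -- flat frontier piece
    rintro ⟨y, s⟩ ⟨hy, hs⟩
    simp only [Set.mem_singleton_iff] at hs
    rw [hs]
    have hyε : y ∈ Metric.ball x₀ ε := Metric.ball_subset_ball hrε hy
    constructor
    · rw [hQ.frontier_eq]
      refine ⟨?_, heq0 y hyε⟩
      have hsub : Metric.ball x₀ ε ×ˢ Set.Ioo (t₀ - ε) t₀ ⊆ Q := by
        rintro ⟨z, σ⟩ ⟨hz, hσ⟩
        simp only [Set.mem_Ioo] at hσ
        exact hbelow z σ
          (Set.mk_mem_prod hz (Set.mem_Ioo.mpr ⟨hσ.1, by linarith [hσ.2]⟩)) hσ.2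
      apply closure_mono hsub
      rw [closure_prod_eq]
      refine ⟨subset_closure hyε, ?_⟩
      rw [closure_Ioo (by linarith : t₀ - ε ≠ t₀)]
      exact ⟨by linarith, le_refl _⟩
    · exact hUsub (Set.mk_mem_prod hyε (Set.mem_Ioo.mpr ⟨by linarith, by linarith⟩))
  · -- above t₀ : not in closure Q
    rintro ⟨y, s⟩ ⟨hy, hs⟩
    have hyε : y ∈ Metric.ball x₀ ε := Metric.ball_subset_ball hrε hy
    set V : Set (Spc n) := Metric.ball x₀ ε ×ˢ Set.Ioo t₀ (t₀ + ε) with hVdef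
    have hVopen : IsOpen V := isOpen_ball.prod isOpen_Ioo
    have hQV : Q ⊆ Vᶜ := by
      rintro ⟨z, σ⟩ hzQ hzV
      obtain ⟨hz1, hz2⟩ := hzV
      simp only [Set.mem_Ioo] at hz2
      exact hstrict z σ
        (Set.mk_mem_prod hz1 (Set.mem_Ioo.mpr ⟨by linarith [hz2.1], hz2.2⟩)) hz2.1 hzQ
    have hclV : closure Q ⊆ Vᶜ := closure_minimal hQV hVopen.isClosed_compl
    intro hcl
    simp only [Set.mem_Ioo] at hs
    exact hclV hcl (Set.mk_mem_prod hyε (Set.mem_Ioo.mpr ⟨hs.1, by linarith [hs.2]⟩))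
  · -- below t₀ : in Q
    rintro ⟨y, s⟩ ⟨hy, hs⟩
    simp only [Set.mem_Ioo] at hs
    exact hbelow y s
      (Set.mk_mem_prod (Metric.ball_subset_ball hrε hy)
        (Set.mem_Ioo.mpr ⟨by linarith [hs.1, hs.2], by linarith [hs.1, hs.2]⟩)) hs.2

end
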